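/- Let n ≥ 2 and let a, b, c > 0 satisfy 2na + 8n(n−1)²b + 4n(n−1)c = 1 and suppose the three quantities ((1−a)/a)·(1/(2n−1)), ((1−b)/b)·((1−2na)/(4n(n−1)−1+2na)), and ((1−c)/c)·(2n−1) are all equal to a common value β. Then β is a root of the polynomial P (as defined). -/

import Mathlib

noncomputable def P (n x : ℝ) : ℝ :=
    (8*n^3 - 12*n^2 + 2*n + 1) * x^4
  + (-64*n^6 + 192*n^5 - 192*n^4 + 64*n^3 + 4*n^2 + 2*n - 4) * x^3
  + (-96*n^5 + 224*n^4 - 168*n^3 + 52*n^2 - 18*n + 6) * x^2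
  + (32*n^5 - 112*n^4 + 128*n^3 - 68*n^2 + 22*n - 4) * x
  + (16*n^4 - 32*n^3 + 24*n^2 - 8*n + 1)

theorem stmt_10 (n : ℕ) (hn : 2 ≤ n) (a b c β : ℝ)
    (ha : 0 < a) (hb : 0 < b) (hc : 0 < c) (h2na : 1 - 2*(n:ℝ)*a > 0)
    (hsum : 2*(n:ℝ)*a + 8*(n:ℝ)*((n:ℝ)-1)^2*b + 4*(n:ℝ)*((n:ℝ)-1)*c = 1)
    (heq1 : ((1-a)/a) * (1/(2*(n:ℝ)-1)) = β)
    (heq2 : ((1-b)/b) * ((1-2*(n:ℝ)*a)/(4*(n:ℝ)*((n:ℝ)-1)-1+2*(n:ℝ)*a)) = β)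
    (heq3 : ((1-c)/c) * (2*(n:ℝ)-1) = β) :
    P n β = 0 := by
  set N : ℝ := (n : ℝ) with hN
  have hN2 : (2:ℝ) ≤ N := by rw [hN]; exact_mod_cast hn
  have h2n1 : (2*N - 1) ≠ 0 := by nlinarith
  have ha0 : a ≠ 0 := ne_of_gt ha
  have hb0 : b ≠ 0 := ne_of_gt hb
  have hc0 : c ≠ 0 := ne_of_gt hc
  have hden : 4*N*(N-1) - 1 + 2*N*a ≠ 0 := by nlinarith
  -- cleared forms
  have e1 : a * (1 + (2*N - 1)*β) = 1 := by
    field_simp at heq1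
    linear_combination -heq1
  have e2 : b * ((1 - 2*N*a) + β*(4*N*(N-1) - (1 - 2*N*a))) = 1 - 2*N*a := by
    rw [div_mul_div_comm, div_eq_iff (mul_ne_zero hb0 hden)] at heq2
    linear_combination -heq2
  have e3 : c * ((2*N - 1) + β) = 2*N - 1 := by
    field_simp at heq3
    linear_combination -heq3
  have hP : (1 - 2*N) * P N β = 0 := by
    unfold P
    linear_combination
      (-16*N^2*(N-1)^2*((1-β)*b-1)*(1+(2*N-1)*β)*(2*N-1+β)
        - 2*N*(2*N-1+β)*(((2*N-1)*β+1-2*N)*(1-β)+4*N*(N-1)*β*(1+(2*N-1)*β))) * e1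
      + (-8*N*(N-1)^2*(1+(2*N-1)*β)^2*(2*N-1+β)) * e2
      + (-4*N*(N-1)*(1+(2*N-1)*β)*(((2*N-1)*β+1-2*N)*(1-β)+4*N*(N-1)*β*(1+(2*N-1)*β))) * e3
      + ((1+(2*N-1)*β)*(2*N-1+β)*(((2*N-1)*β+1-2*N)*(1-β)+4*N*(N-1)*β*(1+(2*N-1)*β))) * hsum
  have h12 : (1 - 2*N) ≠ 0 := by nlinarith
  rcases mul_eq_zero.mp hP with h | h
  · exact absurd h h12
  · exact h
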